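/- arXiv:2004.12374 — 8 statements merged into one kernel-verified Lean document; each statement's English description precedes it below -/
import Mathlib

section
/- Let U ⊆ ℝ² be open, let T, λ : U → ℝ be differentiable, and let P : U → ℝ be differentiable and nowhere zero, with 1 + T(x,y)P(x,y) ≠ 0 and 1 − T(x,y)P(x,y) ≠ 0 on U. Suppose that the two slope fields m₁ = (P − T)/(1 + PT) and m₂ = −(T + P)/(1 − PT) are geodesic for the conformal metric e^{2λ}(dx² + dy²), i.e. for m = m₁ and m = m₂ one has ∂_x m + m ∂_y m = (m² + 1)(λ_y − λ_x m) at every point of U. Then the partial derivatives of P satisfy P_x = ((1+P²)/(P(1+T²))) · [ ((1+P²)/(1+T²))·T·T_x + ((P²−T²)/(1+T²))·T_y + (T²−P²)·λ_x + T(1+P²)·λ_y ] and P_y = ((1+P²)/(P(1+T²))) · [ ((1−T²P²)/(1+T²))·T_x − ((1+P²)/(1+T²))·T·T_y + T(1+P²)·λ_x + (1−T²P²)·λ_y ] on U. -/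
/-- Partial derivative in the first coordinate direction. -/
noncomputable def pdx (f : ℝ × ℝ → ℝ) (p : ℝ × ℝ) : ℝ := fderiv ℝ f p (1, 0)

/-- Partial derivative in the second coordinate direction. -/
noncomputable def pdy (f : ℝ × ℝ → ℝ) (p : ℝ × ℝ) : ℝ := fderiv ℝ f p (0, 1)

lemma pd_div_apply {f g : ℝ × ℝ → ℝ} {f' g' : ℝ × ℝ →L[ℝ] ℝ} {p v : ℝ × ℝ}
    (hf : HasFDerivAt f f' p) (hg : HasFDerivAt g g' p) (h0 : g p ≠ 0) :
    fderiv ℝ (fun q => f q / g q) p v = (f' v * g p - f p * g' v) / g p ^ 2 := by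
  have hinv : HasFDerivAt (fun q => (g q)⁻¹) ((-(g p ^ 2)⁻¹) • g') p :=
    (hasDerivAt_inv h0).comp_hasFDerivAt p hg
  have hmul : HasFDerivAt (fun q => f q * (g q)⁻¹)
      (f p • ((-(g p ^ 2)⁻¹) • g') + (g p)⁻¹ • f') p := hf.mul hinv
  have hd : fderiv ℝ (fun q => f q / g q) p
      = f p • ((-(g p ^ 2)⁻¹) • g') + (g p)⁻¹ • f' := by
    simp only [div_eq_mul_inv]
    exact hmul.fderiv
  rw [hd]
  simp only [ContinuousLinearMap.add_apply, ContinuousLinearMap.smul_apply, smul_eq_mul]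
  field_simp
  ring

lemma pdv_m1 {T P : ℝ × ℝ → ℝ} {p v : ℝ × ℝ}
    (hT : DifferentiableAt ℝ T p) (hP : DifferentiableAt ℝ P p)
    (h0 : 1 + P p * T p ≠ 0) :
    fderiv ℝ (fun q => (P q - T q) / (1 + P q * T q)) p v =
      ((fderiv ℝ P p v - fderiv ℝ T p v) * (1 + P p * T p)
        - (P p - T p) * (P p * fderiv ℝ T p v + T p * fderiv ℝ P p v))
        / (1 + P p * T p) ^ 2 := by
  have hnum : HasFDerivAt (fun q => P q - T q) (fderiv ℝ P p - fderiv ℝ T p) p :=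
    hP.hasFDerivAt.sub hT.hasFDerivAt
  have hden : HasFDerivAt (fun q => 1 + P q * T q)
      (0 + (P p • fderiv ℝ T p + T p • fderiv ℝ P p)) p :=
    (hasFDerivAt_const 1 p).add (hP.hasFDerivAt.mul hT.hasFDerivAt)
  rw [pd_div_apply hnum hden h0]
  simp only [ContinuousLinearMap.add_apply, ContinuousLinearMap.sub_apply,
    ContinuousLinearMap.smul_apply, ContinuousLinearMap.zero_apply, smul_eq_mul, zero_add]

lemma pdv_m2 {T P : ℝ × ℝ → ℝ} {p v : ℝ × ℝ}
    (hT : DifferentiableAt ℝ T p) (hP : DifferentiableAt ℝ P p)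
    (h0 : 1 - P p * T p ≠ 0) :
    fderiv ℝ (fun q => -(T q + P q) / (1 - P q * T q)) p v =
      ((-(fderiv ℝ T p v + fderiv ℝ P p v)) * (1 - P p * T p)
        - (-(T p + P p)) * (-(P p * fderiv ℝ T p v + T p * fderiv ℝ P p v)))
        / (1 - P p * T p) ^ 2 := by
  have hnum : HasFDerivAt (fun q => -(T q + P q)) (-(fderiv ℝ T p + fderiv ℝ P p)) p :=
    (hT.hasFDerivAt.add hP.hasFDerivAt).neg
  have hden : HasFDerivAt (fun q => 1 - P q * T q)
      (0 - (P p • fderiv ℝ T p + T p • fderiv ℝ P p)) p :=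
    (hasFDerivAt_const 1 p).sub (hP.hasFDerivAt.mul hT.hasFDerivAt)
  rw [pd_div_apply hnum hden h0]
  simp only [ContinuousLinearMap.add_apply, ContinuousLinearMap.sub_apply,
    ContinuousLinearMap.neg_apply, ContinuousLinearMap.smul_apply,
    ContinuousLinearMap.zero_apply, smul_eq_mul, zero_sub, neg_add_rev]

/-- if the two slope fields `m₁ = (P − T)/(1 + PT)` and
`m₂ = −(T + P)/(1 − PT)` are geodesic for the conformal metric `e^{2λ}(dx² + dy²)`,
then the partial derivatives of `P` satisfy the stated first-order system. -/
theorem quadratic_integral_P_derivatives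
    (U : Set (ℝ × ℝ)) (hU : IsOpen U)
    (T lam P : ℝ × ℝ → ℝ)
    (hT : ∀ p ∈ U, DifferentiableAt ℝ T p)
    (hlam : ∀ p ∈ U, DifferentiableAt ℝ lam p)
    (hP : ∀ p ∈ U, DifferentiableAt ℝ P p)
    (hP0 : ∀ p ∈ U, P p ≠ 0)
    (h1 : ∀ p ∈ U, 1 + T p * P p ≠ 0)
    (h2 : ∀ p ∈ U, 1 - T p * P p ≠ 0)
    (m₁ m₂ : ℝ × ℝ → ℝ)
    (hm₁ : ∀ p, m₁ p = (P p - T p) / (1 + P p * T p))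
    (hm₂ : ∀ p, m₂ p = -(T p + P p) / (1 - P p * T p))
    (hgeo₁ : ∀ p ∈ U, pdx m₁ p + m₁ p * pdy m₁ p
      = ((m₁ p) ^ 2 + 1) * (pdy lam p - pdx lam p * m₁ p))
    (hgeo₂ : ∀ p ∈ U, pdx m₂ p + m₂ p * pdy m₂ p
      = ((m₂ p) ^ 2 + 1) * (pdy lam p - pdx lam p * m₂ p)) :
    ∀ p ∈ U,
      pdx P p = ((1 + (P p) ^ 2) / (P p * (1 + (T p) ^ 2))) *
        ( ((1 + (P p) ^ 2) / (1 + (T p) ^ 2)) * T p * pdx T p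
          + (((P p) ^ 2 - (T p) ^ 2) / (1 + (T p) ^ 2)) * pdy T p
          + ((T p) ^ 2 - (P p) ^ 2) * pdx lam p
          + T p * (1 + (P p) ^ 2) * pdy lam p )
      ∧
      pdy P p = ((1 + (P p) ^ 2) / (P p * (1 + (T p) ^ 2))) *
        ( ((1 - (T p) ^ 2 * (P p) ^ 2) / (1 + (T p) ^ 2)) * pdx T p
          - ((1 + (P p) ^ 2) / (1 + (T p) ^ 2)) * T p * pdy T p
          + T p * (1 + (P p) ^ 2) * pdx lam p
          + (1 - (T p) ^ 2 * (P p) ^ 2) * pdy lam p ) := by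
  intro p hp
  have hTp := hT p hp
  have hPp := hP p hp
  have hd1 : 1 + P p * T p ≠ 0 := by rw [mul_comm]; exact h1 p hp
  have hd2 : 1 - P p * T p ≠ 0 := by rw [mul_comm]; exact h2 p hp
  have hm₁f : m₁ = fun q => (P q - T q) / (1 + P q * T q) := funext hm₁
  have hm₂f : m₂ = fun q => -(T q + P q) / (1 - P q * T q) := funext hm₂
  have e1x : pdx m₁ p = ((fderiv ℝ P p (1,0) - fderiv ℝ T p (1,0)) * (1 + P p * T p)
      - (P p - T p) * (P p * fderiv ℝ T p (1,0) + T p * fderiv ℝ P p (1,0))) / (1 + P p * T p) ^ 2 := by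
    rw [pdx, hm₁f]; exact pdv_m1 hTp hPp hd1
  have e1y : pdy m₁ p = ((fderiv ℝ P p (0,1) - fderiv ℝ T p (0,1)) * (1 + P p * T p)
      - (P p - T p) * (P p * fderiv ℝ T p (0,1) + T p * fderiv ℝ P p (0,1))) / (1 + P p * T p) ^ 2 := by
    rw [pdy, hm₁f]; exact pdv_m1 hTp hPp hd1
  have e2x : pdx m₂ p = ((-(fderiv ℝ T p (1,0) + fderiv ℝ P p (1,0))) * (1 - P p * T p)
      - (-(T p + P p)) * (-(P p * fderiv ℝ T p (1,0) + T p * fderiv ℝ P p (1,0)))) / (1 - P p * T p) ^ 2 := by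
    rw [pdx, hm₂f]; exact pdv_m2 hTp hPp hd2
  have e2y : pdy m₂ p = ((-(fderiv ℝ T p (0,1) + fderiv ℝ P p (0,1))) * (1 - P p * T p)
      - (-(T p + P p)) * (-(P p * fderiv ℝ T p (0,1) + T p * fderiv ℝ P p (0,1)))) / (1 - P p * T p) ^ 2 := by
    rw [pdy, hm₂f]; exact pdv_m2 hTp hPp hd2
  have eq1 := hgeo₁ p hp
  have eq2 := hgeo₂ p hp
  rw [e1x, e1y, hm₁ p] at eq1
  rw [e2x, e2y, hm₂ p] at eq2
  have ht2 : (1 : ℝ) + T p ^ 2 ≠ 0 := by positivity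
  simp only [pdx, pdy] at *
  set t := T p
  set q := P p
  set a : ℝ := fderiv ℝ T p (1,0)
  set b : ℝ := fderiv ℝ T p (0,1)
  set c : ℝ := fderiv ℝ P p (1,0)
  set d : ℝ := fderiv ℝ P p (0,1)
  set lx : ℝ := fderiv ℝ lam p (1,0)
  set ly : ℝ := fderiv ℝ lam p (0,1)
  have E1 : (1+t^2)*(c*(1+q*t)+d*(q-t))
      = (1+q^2)*(a*(1+q*t)+b*(q-t)) + (1+q^2)*(1+t^2)*(ly*(1+q*t) - lx*(q-t)) := by
    field_simp at eq1
    refine mul_right_cancel₀ (pow_ne_zero 5 hd1) ?_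
    linear_combination (1+q*t)^5 * eq1
  have E2 : (1+t^2)*(c*(1-q*t)+d*(-(t+q)))
      = -((1+q^2)*(a*(1-q*t)+b*(-(t+q))) + (1+q^2)*(1+t^2)*(ly*(1-q*t) - lx*(-(t+q)))) := by
    field_simp at eq2
    refine mul_right_cancel₀ (pow_ne_zero 5 hd2) ?_
    linear_combination -(1-q*t)^5 * eq2
  have hq0 : q ≠ 0 := hP0 p hp
  constructor
  · field_simp
    linear_combination ((t+q)/2) * E1 + ((q-t)/2) * E2
  · field_simp
    linear_combination ((1-q*t)/2) * E1 - ((1+q*t)/2) * E2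
end

section
/- Let U ⊆ ℝ² be open, let Λ : U → ℝ be C² and positive, and let P : U → ℝ be differentiable and nowhere zero, with partial derivatives satisfying P_u = −P(1+P²)Λ_u/(2Λ) and P_v = (1+P²)Λ_v/(2PΛ) at every point of U. Then the mixed second partial derivative of Λ vanishes: Λ_{uv} = 0 on U. (Hence Λ(u,v) = f(u) + g(v) locally, i.e. the metric Λ(du² + dv²) has Liouville form and its geodesic flow admits a quadratic first integral.) -/
/-- Partial derivative in the first coordinate direction. -/
noncomputable def pdu (f : ℝ × ℝ → ℝ) (p : ℝ × ℝ) : ℝ := fderiv ℝ f p (1, 0)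

/-- Partial derivative in the second coordinate direction. -/
noncomputable def pdv (f : ℝ × ℝ → ℝ) (p : ℝ × ℝ) : ℝ := fderiv ℝ f p (0, 1)

/-- Restriction of a differentiable function to a vertical line has the
`pdv` partial as derivative. -/
lemma hasDerivAt_slice_v (F : ℝ × ℝ → ℝ) (u t : ℝ)
    (hF : DifferentiableAt ℝ F (u, t)) :
    HasDerivAt (fun s => F (u, s)) (pdv F (u, t)) t := by
  have hline : HasDerivAt (fun s : ℝ => ((u, s) : ℝ × ℝ)) ((0 : ℝ), (1 : ℝ)) t :=
    HasDerivAt.prodMk (hasDerivAt_const t u) (hasDerivAt_id t)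
  exact hF.hasFDerivAt.comp_hasDerivAt t hline

/-- Restriction of a differentiable function to a horizontal line has the
`pdu` partial as derivative. -/
lemma hasDerivAt_slice_u (F : ℝ × ℝ → ℝ) (u t : ℝ)
    (hF : DifferentiableAt ℝ F (u, t)) :
    HasDerivAt (fun s => F (s, t)) (pdu F (u, t)) u := by
  have hline : HasDerivAt (fun s : ℝ => ((s, t) : ℝ × ℝ)) ((1 : ℝ), (0 : ℝ)) u :=
    HasDerivAt.prodMk (hasDerivAt_id u) (hasDerivAt_const u t)
  exact hF.hasFDerivAt.comp_hasDerivAt u hline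

/-- if `P` is a nowhere-zero differentiable solution of the
first-order system `P_u = −P(1+P²)Λ_u/(2Λ)`, `P_v = (1+P²)Λ_v/(2PΛ)` with `Λ` a
positive `C²` function, then the mixed partial `Λ_{uv}` vanishes on `U`
(so `Λ = f(u) + g(v)` locally and the metric has Liouville form). -/
theorem mixed_partial_of_Lambda_vanishes
    (U : Set (ℝ × ℝ)) (hU : IsOpen U)
    (Lam P : ℝ × ℝ → ℝ)
    (hLam : ContDiffOn ℝ 2 Lam U)
    (hLampos : ∀ p ∈ U, 0 < Lam p)
    (hP : ∀ p ∈ U, DifferentiableAt ℝ P p)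
    (hP0 : ∀ p ∈ U, P p ≠ 0)
    (hPu : ∀ p ∈ U, pdu P p = -(P p * (1 + (P p) ^ 2) * pdu Lam p) / (2 * Lam p))
    (hPv : ∀ p ∈ U, pdv P p = (1 + (P p) ^ 2) * pdv Lam p / (2 * P p * Lam p)) :
    ∀ p ∈ U, pdv (fun q => pdu Lam q) p = 0 := by
  -- The key auxiliary function `f = Λ / (1 + P²)`.
  set f : ℝ × ℝ → ℝ := fun q => Lam q / (1 + (P q) ^ 2) with hf
  have hLamDiff : ∀ q ∈ U, DifferentiableAt ℝ Lam q := fun q hq =>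
    (hLam.contDiffAt (hU.mem_nhds hq)).differentiableAt (by norm_num)
  have hDne : ∀ q : ℝ × ℝ, (1 + (P q) ^ 2) ≠ 0 := fun q => by positivity
  -- vertical derivative of f is zero on U
  have hfv : ∀ u t : ℝ, (u, t) ∈ U →
      HasDerivAt (fun s => f (u, s)) 0 t := by
    intro u t hq
    have cL := hasDerivAt_slice_v Lam u t (hLamDiff _ hq)
    have cP := hasDerivAt_slice_v P u t (hP _ hq)
    have dD : HasDerivAt (fun s => 1 + (P (u, s)) ^ 2)
        ((2 : ℕ) * (P (u, t)) ^ (2 - 1) * pdv P (u, t)) t :=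
      (cP.pow 2).const_add 1
    have h := cL.div dD (hDne (u, t))
    have e : (pdv Lam (u, t) * (1 + P (u, t) ^ 2) -
        Lam (u, t) * ((2 : ℕ) * (P (u, t)) ^ (2 - 1) * pdv P (u, t))) /
        (1 + P (u, t) ^ 2) ^ 2 = 0 := by
      rw [hPv _ hq]
      have h1 : Lam (u, t) ≠ 0 := (hLampos _ hq).ne'
      have h2 : P (u, t) ≠ 0 := hP0 _ hq
      field_simp
      ring
    rw [e] at h
    exact h
  -- horizontal derivative of f equals Λ_u on U
  have hfu : ∀ u t : ℝ, (u, t) ∈ U →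
      HasDerivAt (fun s => f (s, t)) (pdu Lam (u, t)) u := by
    intro u t hq
    have cL := hasDerivAt_slice_u Lam u t (hLamDiff _ hq)
    have cP := hasDerivAt_slice_u P u t (hP _ hq)
    have dD : HasDerivAt (fun s => 1 + (P (s, t)) ^ 2)
        ((2 : ℕ) * (P (u, t)) ^ (2 - 1) * pdu P (u, t)) u :=
      (cP.pow 2).const_add 1
    have h := cL.div dD (hDne (u, t))
    have e : (pdu Lam (u, t) * (1 + P (u, t) ^ 2) -
        Lam (u, t) * ((2 : ℕ) * (P (u, t)) ^ (2 - 1) * pdu P (u, t))) /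
        (1 + P (u, t) ^ 2) ^ 2 = pdu Lam (u, t) := by
      rw [hPu _ hq]
      have h1 : Lam (u, t) ≠ 0 := (hLampos _ hq).ne'
      have h2 : (1 + P (u, t) ^ 2) ≠ 0 := hDne (u, t)
      field_simp
      ring
    rw [e] at h
    exact h
  rintro ⟨a, b⟩ hp
  obtain ⟨ε, hε, hball⟩ := Metric.isOpen_iff.mp hU (a, b) hp
  -- membership lemma
  have hmem : ∀ u v t : ℝ, (u, v) ∈ Metric.ball ((a, b) : ℝ × ℝ) ε →
      |t - b| ≤ |v - b| → (u, t) ∈ Metric.ball ((a, b) : ℝ × ℝ) ε := by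
    intro u v t huv ht
    have h1 : max (dist u a) (dist v b) < ε := by
      simpa [Prod.dist_eq] using huv
    have h2 : dist u a < ε := lt_of_le_of_lt (le_max_left _ _) h1
    have h3 : dist v b < ε := lt_of_le_of_lt (le_max_right _ _) h1
    have h4 : dist t b < ε := by
      rw [Real.dist_eq]
      exact lt_of_le_of_lt ht (by rw [Real.dist_eq] at h3; exact h3)
    simp only [Metric.mem_ball, Prod.dist_eq]
    exact max_lt h2 h4
  -- Claim A: f is constant in the vertical direction on the ball
  have claimA : ∀ u v : ℝ, (u, v) ∈ Metric.ball ((a, b) : ℝ × ℝ) ε →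
      f (u, v) = f (u, b) := by
    intro u v huv
    have hseg : ∀ t : ℝ, |t - b| ≤ |v - b| → (u, t) ∈ U := fun t ht =>
      hball (hmem u v t huv ht)
    have hder : ∀ t : ℝ, |t - b| ≤ |v - b| →
        HasDerivAt (fun s => f (u, s)) 0 t := fun t ht => hfv u t (hseg t ht)
    rcases le_total b v with hbv | hvb
    · have habs : ∀ t ∈ Set.Icc b v, |t - b| ≤ |v - b| := by
        intro t ht
        rw [abs_of_nonneg (by linarith [ht.1]), abs_of_nonneg (by linarith)]
        linarith [ht.2]
      have hcont : ContinuousOn (fun s => f (u, s)) (Set.Icc b v) := fun t ht =>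
        ((hder t (habs t ht)).continuousAt).continuousWithinAt
      have := constant_of_has_deriv_right_zero hcont
        (fun t ht => ((hder t (habs t (Set.mem_Icc_of_Ico ht))).hasDerivWithinAt))
      exact this v (Set.right_mem_Icc.mpr hbv)
    · have habs : ∀ t ∈ Set.Icc v b, |t - b| ≤ |v - b| := by
        intro t ht
        rw [abs_of_nonpos (by linarith [ht.2]), abs_of_nonpos (by linarith)]
        linarith [ht.1]
      have hcont : ContinuousOn (fun s => f (u, s)) (Set.Icc v b) := fun t ht =>
        ((hder t (habs t ht)).continuousAt).continuousWithinAt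
      have := constant_of_has_deriv_right_zero hcont
        (fun t ht => ((hder t (habs t (Set.mem_Icc_of_Ico ht))).hasDerivWithinAt))
      exact (this b (Set.right_mem_Icc.mpr hvb)).symm
  -- Claim B: Λ_u along the vertical line through (a,b) is locally constant
  have claimB : ∀ v : ℝ, |v - b| < ε → pdu Lam (a, v) = pdu Lam (a, b) := by
    intro v hv
    have hav : ((a, v) : ℝ × ℝ) ∈ Metric.ball ((a, b) : ℝ × ℝ) ε := by
      simp only [Metric.mem_ball, Prod.dist_eq, Real.dist_eq]
      simp [abs_nonneg, hv, hε]
    have h1 : HasDerivAt (fun s => f (s, v)) (pdu Lam (a, v)) a :=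
      hfu a v (hball hav)
    have h2 : HasDerivAt (fun s => f (s, b)) (pdu Lam (a, b)) a := hfu a b hp
    have h3 : (fun s => f (s, v)) =ᶠ[nhds a] (fun s => f (s, b)) := by
      have hball' : ∀ᶠ s in nhds a, s ∈ Metric.ball a ε :=
        Metric.ball_mem_nhds a hε
      filter_upwards [hball'] with s hs
      apply claimA
      simp only [Metric.mem_ball, Prod.dist_eq, Real.dist_eq] at hs ⊢
      exact max_lt (by simpa [Real.dist_eq] using hs) hv
    have h2' : HasDerivAt (fun s => f (s, v)) (pdu Lam (a, b)) a :=
      h2.congr_of_eventuallyEq h3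
    exact h1.unique h2'
  -- Final step: Λ_u is differentiable and locally constant in v, hence pdv = 0.
  have hC2 : ContDiffAt ℝ 2 Lam (a, b) := hLam.contDiffAt (hU.mem_nhds hp)
  have hfdC : ContDiffAt ℝ 1 (fderiv ℝ Lam) (a, b) :=
    hC2.fderiv_right (by norm_num)
  have hdiff : DifferentiableAt ℝ (fun q => pdu Lam q) (a, b) := by
    have : DifferentiableAt ℝ (fun q => fderiv ℝ Lam q ((1 : ℝ), (0 : ℝ))) (a, b) :=
      (hfdC.differentiableAt one_ne_zero).clm_apply (differentiableAt_const _)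
    exact this
  have g1 : HasDerivAt (fun t => pdu Lam (a, t))
      (pdv (fun q => pdu Lam q) (a, b)) b :=
    hasDerivAt_slice_v (fun q => pdu Lam q) a b hdiff
  have g2 : HasDerivAt (fun t => pdu Lam (a, t)) 0 b := by
    have hconst : (fun t => pdu Lam (a, t)) =ᶠ[nhds b]
        (fun _ => pdu Lam (a, b)) := by
      have hball' : ∀ᶠ t in nhds b, t ∈ Metric.ball b ε :=
        Metric.ball_mem_nhds b hε
      filter_upwards [hball'] with t ht
      exact claimB t (by simpa [Real.dist_eq] using ht)
    exact (hasDerivAt_const b (pdu Lam (a, b))).congr_of_eventuallyEq hconst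
  exact g1.unique g2
end

section
/- Let U ⊆ ℝ² be open, let Λ : U → ℝ be differentiable and positive, and let P : U → ℝ be differentiable and nowhere zero, satisfying P_u = −P(1+P²)Λ_u/(2Λ) and P_v = (1+P²)Λ_v/(2PΛ) on U. Define on U × ℝ² the functions H(u,v,p,q) = (p² + q²)/(2Λ(u,v)) and I₂(u,v,p,q) = (q² − P(u,v)² p²)/(1 + P(u,v)²). Then the canonical Poisson bracket {H, I₂} = H_p (I₂)_u − H_u (I₂)_p + H_q (I₂)_v − H_v (I₂)_q vanishes identically on U × ℝ². In other words, the integrating factor μ = 1/(1+P²) makes μ(q − Pp)(q + Pp) a quadratic first integral of the geodesic flow of the metric Λ(du² + dv²). -/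
private lemma chainF' (f : ℝ×ℝ → ℝ) (g : ℝ → ℝ) (g' : ℝ) (x : ℝ×ℝ) (w : ℝ×ℝ)
    (hf : DifferentiableAt ℝ f x) (hg : HasDerivAt g g' (f x)) :
    fderiv ℝ (fun y => g (f y)) x w = g' * fderiv ℝ f x w := by
  have h := hg.comp_hasFDerivAt x hf.hasFDerivAt
  rw [show (fun y => g (f y)) = g ∘ f from rfl, h.fderiv]
  simp

private lemma momH' (c : ℝ) (z w : ℝ×ℝ) :
    fderiv ℝ (fun pq : ℝ×ℝ => (pq.1^2+pq.2^2)/c) z w = (2*z.1*w.1 + 2*z.2*w.2)/c := by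
  have e : (fun pq : ℝ×ℝ => (pq.1^2+pq.2^2)/c) = fun pq : ℝ×ℝ => (pq.1*pq.1 + pq.2*pq.2)*c⁻¹ := by
    funext pq; rw [sq, sq, div_eq_mul_inv]
  rw [e]
  have h := (((hasFDerivAt_fst (𝕜 := ℝ) (p := z)).mul hasFDerivAt_fst).add
    ((hasFDerivAt_snd).mul hasFDerivAt_snd)).mul_const c⁻¹
  rw [(show HasFDerivAt (fun pq : ℝ×ℝ => (pq.1*pq.1 + pq.2*pq.2)*c⁻¹) _ z from h).fderiv]
  simp [div_eq_mul_inv]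
  ring

private lemma momI' (a b : ℝ) (z w : ℝ×ℝ) :
    fderiv ℝ (fun pq : ℝ×ℝ => (pq.2^2 - a*pq.1^2)/b) z w = (2*z.2*w.2 - a*(2*z.1*w.1))/b := by
  have e : (fun pq : ℝ×ℝ => (pq.2^2 - a*pq.1^2)/b)
      = fun pq : ℝ×ℝ => (pq.2*pq.2 - a*(pq.1*pq.1))*b⁻¹ := by
    funext pq; rw [sq, sq, div_eq_mul_inv]
  rw [e]
  have h := ((((hasFDerivAt_snd (𝕜 := ℝ) (p := z)).mul hasFDerivAt_snd)).sub
    (((hasFDerivAt_fst).mul hasFDerivAt_fst).const_mul a)).mul_const b⁻¹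
  rw [(show HasFDerivAt (fun pq : ℝ×ℝ => (pq.2*pq.2 - a*(pq.1*pq.1))*b⁻¹) _ z from h).fderiv]
  simp [div_eq_mul_inv]
  ring



/-- Canonical Poisson bracket `{F,G} = F_p G_u − F_u G_p + F_q G_v − F_v G_q` of two
functions `F G : (u,v) ↦ (p,q) ↦ ℝ` on phase space `ℝ² × ℝ²`. -/
noncomputable def poissonBracket (F G : ℝ × ℝ → ℝ × ℝ → ℝ) (x pq : ℝ × ℝ) : ℝ :=
    fderiv ℝ (F x) pq (1, 0) * fderiv ℝ (fun y => G y pq) x (1, 0)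
  - fderiv ℝ (fun y => F y pq) x (1, 0) * fderiv ℝ (G x) pq (1, 0)
  + fderiv ℝ (F x) pq (0, 1) * fderiv ℝ (fun y => G y pq) x (0, 1)
  - fderiv ℝ (fun y => F y pq) x (0, 1) * fderiv ℝ (G x) pq (0, 1)

/-- if `P` solves the first-order system expressing that `dv/du = ±P`
are geodesic for `Λ(du² + dv²)`, then `I₂ = (q² − P²p²)/(1 + P²)` Poisson-commutes
with the Hamiltonian `H = (p² + q²)/(2Λ)`. -/
theorem integrating_factor_gives_first_integral
    (U : Set (ℝ × ℝ)) (hU : IsOpen U)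
    (Lam P : ℝ × ℝ → ℝ)
    (hLam : ∀ p ∈ U, DifferentiableAt ℝ Lam p)
    (hLampos : ∀ p ∈ U, 0 < Lam p)
    (hP : ∀ p ∈ U, DifferentiableAt ℝ P p)
    (hP0 : ∀ p ∈ U, P p ≠ 0)
    (hPu : ∀ p ∈ U, pdu P p = -(P p * (1 + (P p) ^ 2) * pdu Lam p) / (2 * Lam p))
    (hPv : ∀ p ∈ U, pdv P p = (1 + (P p) ^ 2) * pdv Lam p / (2 * P p * Lam p))
    (H I₂ : ℝ × ℝ → ℝ × ℝ → ℝ)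
    (hH : ∀ x pq : ℝ × ℝ, H x pq = (pq.1 ^ 2 + pq.2 ^ 2) / (2 * Lam x))
    (hI₂ : ∀ x pq : ℝ × ℝ,
      I₂ x pq = (pq.2 ^ 2 - (P x) ^ 2 * pq.1 ^ 2) / (1 + (P x) ^ 2)) :
    ∀ x ∈ U, ∀ pq : ℝ × ℝ, poissonBracket H I₂ x pq = 0 := by
  intro x hx pq
  have hLx : Lam x ≠ 0 := (hLampos x hx).ne'
  have hPx : P x ≠ 0 := hP0 x hx
  have h1PP : (1:ℝ) + (P x)^2 ≠ 0 := by positivity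
  have hPu' := hPu x hx
  have hPv' := hPv x hx
  simp only [pdu, pdv] at hPu' hPv'
  have hgH : HasDerivAt (fun t : ℝ => (pq.1^2+pq.2^2)/(2*t))
      ((0*(2*Lam x) - (pq.1^2+pq.2^2)*(2*1))/(2*Lam x)^2) (Lam x) :=
    (hasDerivAt_const _ _).div ((hasDerivAt_id (Lam x)).const_mul 2)
      (by simp [hLx])
  have eH : ∀ w, fderiv ℝ (fun y => H y pq) x w
      = ((0*(2*Lam x) - (pq.1^2+pq.2^2)*(2*1))/(2*Lam x)^2) * fderiv ℝ Lam x w := by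
    intro w
    rw [show (fun y => H y pq) = (fun y => (pq.1^2+pq.2^2)/(2*Lam y)) from funext fun y => hH y pq]
    exact chainF' Lam _ _ x w (hLam x hx) hgH
  have hgI : HasDerivAt (fun t : ℝ => (pq.2^2 - t^2*pq.1^2)/(1+t^2))
      (((-(2*(P x)*pq.1^2))*(1+(P x)^2) - (pq.2^2 - (P x)^2*pq.1^2)*(2*(P x)))/(1+(P x)^2)^2)
      (P x) := by
    have h := (((hasDerivAt_pow 2 (P x)).mul_const (pq.1^2)).const_sub (pq.2^2)).div
      ((hasDerivAt_pow 2 (P x)).const_add 1) h1PP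
    exact h.congr_deriv (by norm_num)
  have eI : ∀ w, fderiv ℝ (fun y => I₂ y pq) x w
      = (((-(2*(P x)*pq.1^2))*(1+(P x)^2) - (pq.2^2 - (P x)^2*pq.1^2)*(2*(P x)))/(1+(P x)^2)^2)
        * fderiv ℝ P x w := by
    intro w
    rw [show (fun y => I₂ y pq) = (fun y => (pq.2^2 - (P y)^2*pq.1^2)/(1+(P y)^2))
      from funext fun y => hI₂ y pq]
    exact chainF' P _ _ x w (hP x hx) hgI
  have eHm : ∀ w, fderiv ℝ (H x) pq w = (2*pq.1*w.1 + 2*pq.2*w.2)/(2*Lam x) := by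
    intro w
    rw [show H x = (fun z : ℝ×ℝ => (z.1^2+z.2^2)/(2*Lam x)) from funext fun z => hH x z]
    exact momH' _ pq w
  have eIm : ∀ w, fderiv ℝ (I₂ x) pq w
      = (2*pq.2*w.2 - (P x)^2*(2*pq.1*w.1))/(1+(P x)^2) := by
    intro w
    rw [show I₂ x = (fun z : ℝ×ℝ => (z.2^2 - (P x)^2*z.1^2)/(1+(P x)^2))
      from funext fun z => hI₂ x z]
    exact momI' _ _ pq w
  unfold poissonBracket
  rw [eH (1,0), eH (0,1), eI (1,0), eI (0,1), eHm (1,0), eHm (0,1), eIm (1,0), eIm (0,1),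
    hPu', hPv']
  norm_num
  field_simp
  ring
end

section
/- Let U ⊆ ℝ² be open and connected, let Λ : U → ℝ be differentiable and positive, and let P : U → ℝ be differentiable and nowhere zero, satisfying P_u = −P(1+P²)Λ_u/(2Λ) and P_v = (1+P²)Λ_v/(2PΛ) on U. Let μ : U → ℝ be differentiable and suppose that the canonical Poisson bracket {H, μ·(q² − P²p²)} vanishes identically on U × ℝ², where H(u,v,p,q) = (p² + q²)/(2Λ(u,v)). Then the function μ·(1 + P²) is constant on U. -/
set_option maxHeartbeats 1000000 in
/-- the integrating factor `μ` making `μ(q² − P²p²)` a first integral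
of the geodesic flow of `Λ(du² + dv²)` is proportional to `1/(1+P²)`:
`μ(1 + P²)` is constant on the connected set `U`. -/
theorem integrating_factor_unique
    (U : Set (ℝ × ℝ)) (hU : IsOpen U) (hUconn : IsConnected U)
    (Lam P : ℝ × ℝ → ℝ)
    (hLam : ∀ p ∈ U, DifferentiableAt ℝ Lam p)
    (hLampos : ∀ p ∈ U, 0 < Lam p)
    (hP : ∀ p ∈ U, DifferentiableAt ℝ P p)
    (hP0 : ∀ p ∈ U, P p ≠ 0)
    (hPu : ∀ p ∈ U, pdu P p = -(P p * (1 + (P p) ^ 2) * pdu Lam p) / (2 * Lam p))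
    (hPv : ∀ p ∈ U, pdv P p = (1 + (P p) ^ 2) * pdv Lam p / (2 * P p * Lam p))
    (μ : ℝ × ℝ → ℝ)
    (hμ : ∀ p ∈ U, DifferentiableAt ℝ μ p)
    (H K : ℝ × ℝ → ℝ × ℝ → ℝ)
    (hH : ∀ x pq : ℝ × ℝ, H x pq = (pq.1 ^ 2 + pq.2 ^ 2) / (2 * Lam x))
    (hK : ∀ x pq : ℝ × ℝ,
      K x pq = μ x * (pq.2 ^ 2 - (P x) ^ 2 * pq.1 ^ 2))
    (hbracket : ∀ x ∈ U, ∀ pq : ℝ × ℝ, poissonBracket H K x pq = 0) :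
    ∃ c : ℝ, ∀ x ∈ U, μ x * (1 + (P x) ^ 2) = c := by
  set g : ℝ × ℝ → ℝ := fun y => μ y * (1 + P y ^ 2) with hg
  -- Main step: the derivative of g vanishes on U.
  have key : ∀ x ∈ U, HasFDerivAt g (0 : ℝ × ℝ →L[ℝ] ℝ) x := by
    intro x hx
    have hLx := hLam x hx
    have hPx := hP x hx
    have hμx := hμ x hx
    have hL0 : Lam x ≠ 0 := (hLampos x hx).ne'
    have hPp0 : P x ≠ 0 := hP0 x hx
    have h2L : (2 : ℝ) * Lam x ≠ 0 := by positivity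
    -- the four fderiv computations
    have e1 : ∀ pq : ℝ × ℝ, fderiv ℝ (H x) pq (1, 0) = pq.1 / Lam x ∧
        fderiv ℝ (H x) pq (0, 1) = pq.2 / Lam x := by
      intro pq
      have hfun : H x = fun r : ℝ × ℝ => (2 * Lam x)⁻¹ * (r.1 ^ 2 + r.2 ^ 2) := by
        funext r; rw [hH]; exact div_eq_inv_mul _ _
      have hd : HasFDerivAt (fun r : ℝ × ℝ => (2 * Lam x)⁻¹ * (r.1 ^ 2 + r.2 ^ 2))
          ((2 * Lam x)⁻¹ • ((((2 : ℕ) : ℝ) * pq.1 ^ 1) • ContinuousLinearMap.fst ℝ ℝ ℝ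
            + (((2 : ℕ) : ℝ) * pq.2 ^ 1) • ContinuousLinearMap.snd ℝ ℝ ℝ)) pq :=
        (((hasDerivAt_pow 2 pq.1).comp_hasFDerivAt pq hasFDerivAt_fst).add
          ((hasDerivAt_pow 2 pq.2).comp_hasFDerivAt pq hasFDerivAt_snd)).const_mul _
      constructor <;> · rw [hfun, hd.fderiv]; simp; field_simp
    have e2 : ∀ pq : ℝ × ℝ,
        fderiv ℝ (fun y => H y pq) x (1, 0)
          = -((pq.1 ^ 2 + pq.2 ^ 2) * fderiv ℝ Lam x (1, 0)) / (2 * Lam x ^ 2) ∧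
        fderiv ℝ (fun y => H y pq) x (0, 1)
          = -((pq.1 ^ 2 + pq.2 ^ 2) * fderiv ℝ Lam x (0, 1)) / (2 * Lam x ^ 2) := by
      intro pq
      have hfun : (fun y => H y pq) = fun y => (pq.1 ^ 2 + pq.2 ^ 2) * (2 * Lam y)⁻¹ := by
        funext y; rw [hH]; exact div_eq_mul_inv _ _
      have hd : HasFDerivAt (fun y => (pq.1 ^ 2 + pq.2 ^ 2) * (2 * Lam y)⁻¹)
          ((pq.1 ^ 2 + pq.2 ^ 2) • ((-((2 * Lam x) ^ 2)⁻¹) • ((2 : ℝ) • fderiv ℝ Lam x))) x :=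
        ((hasDerivAt_inv h2L).comp_hasFDerivAt x (hLx.hasFDerivAt.const_mul 2)).const_mul _
      constructor <;> · rw [hfun, hd.fderiv]; simp; field_simp
    have e3 : ∀ pq : ℝ × ℝ,
        fderiv ℝ (K x) pq (1, 0) = -(μ x * (P x ^ 2 * (2 * pq.1))) ∧
        fderiv ℝ (K x) pq (0, 1) = μ x * (2 * pq.2) := by
      intro pq
      have hfun : K x = fun r : ℝ × ℝ => μ x * (r.2 ^ 2 - P x ^ 2 * r.1 ^ 2) := by
        funext r; rw [hK]
      have hd : HasFDerivAt (fun r : ℝ × ℝ => μ x * (r.2 ^ 2 - P x ^ 2 * r.1 ^ 2))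
          ((μ x) • ((((2 : ℕ) : ℝ) * pq.2 ^ 1) • ContinuousLinearMap.snd ℝ ℝ ℝ
            - (P x ^ 2) • ((((2 : ℕ) : ℝ) * pq.1 ^ 1) • ContinuousLinearMap.fst ℝ ℝ ℝ))) pq :=
        (((hasDerivAt_pow 2 pq.2).comp_hasFDerivAt pq hasFDerivAt_snd).sub
          (((hasDerivAt_pow 2 pq.1).comp_hasFDerivAt pq hasFDerivAt_fst).const_mul
            (P x ^ 2))).const_mul _
      constructor <;> · rw [hfun, hd.fderiv]; simp; try ring
    have e4 : ∀ pq : ℝ × ℝ,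
        fderiv ℝ (fun y => K y pq) x (1, 0)
          = μ x * (-(pq.1 ^ 2 * (2 * P x * fderiv ℝ P x (1, 0))))
            + (pq.2 ^ 2 - P x ^ 2 * pq.1 ^ 2) * fderiv ℝ μ x (1, 0) ∧
        fderiv ℝ (fun y => K y pq) x (0, 1)
          = μ x * (-(pq.1 ^ 2 * (2 * P x * fderiv ℝ P x (0, 1))))
            + (pq.2 ^ 2 - P x ^ 2 * pq.1 ^ 2) * fderiv ℝ μ x (0, 1) := by
      intro pq
      have hfun : (fun y => K y pq) = fun y => μ y * (pq.2 ^ 2 - P y ^ 2 * pq.1 ^ 2) := by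
        funext y; rw [hK]
      have hd : HasFDerivAt (fun y => μ y * (pq.2 ^ 2 - P y ^ 2 * pq.1 ^ 2))
          ((μ x) • (-((pq.1 ^ 2) • ((((2 : ℕ) : ℝ) * P x ^ 1) • fderiv ℝ P x)))
            + (pq.2 ^ 2 - P x ^ 2 * pq.1 ^ 2) • fderiv ℝ μ x) x :=
        hμx.hasFDerivAt.mul
          ((((hasDerivAt_pow 2 (P x)).comp_hasFDerivAt x hPx.hasFDerivAt).mul_const
            (pq.1 ^ 2)).const_sub (pq.2 ^ 2))
      constructor <;> · rw [hfun, hd.fderiv]; simp; try ring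
    -- abbreviations
    set L := Lam x
    set Pp := P x
    set M := μ x
    set Lu := fderiv ℝ Lam x (1, 0)
    set Lv := fderiv ℝ Lam x (0, 1)
    set Pu := fderiv ℝ P x (1, 0)
    set Pv := fderiv ℝ P x (0, 1)
    set Mu := fderiv ℝ μ x (1, 0)
    set Mv := fderiv ℝ μ x (0, 1)
    have hPu' : Pu = -(Pp * (1 + Pp ^ 2) * Lu) / (2 * L) := hPu x hx
    have hPv' : Pv = (1 + Pp ^ 2) * Lv / (2 * Pp * L) := hPv x hx
    have hb : ∀ pq : ℝ × ℝ,
        (pq.1 / L) * (M * (-(pq.1 ^ 2 * (2 * Pp * Pu))) + (pq.2 ^ 2 - Pp ^ 2 * pq.1 ^ 2) * Mu)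
        - (-((pq.1 ^ 2 + pq.2 ^ 2) * Lu) / (2 * L ^ 2)) * (-(M * (Pp ^ 2 * (2 * pq.1))))
        + (pq.2 / L) * (M * (-(pq.1 ^ 2 * (2 * Pp * Pv))) + (pq.2 ^ 2 - Pp ^ 2 * pq.1 ^ 2) * Mv)
        - (-((pq.1 ^ 2 + pq.2 ^ 2) * Lv) / (2 * L ^ 2)) * (M * (2 * pq.2)) = 0 := by
      intro pq
      have hbr := hbracket x hx pq
      unfold poissonBracket at hbr
      rw [(e1 pq).1, (e1 pq).2, (e2 pq).1, (e2 pq).2, (e3 pq).1, (e3 pq).2,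
        (e4 pq).1, (e4 pq).2] at hbr
      exact hbr
    have hb1 := hb (1, 0)
    have hb2 := hb (0, 1)
    have hb3 := hb (1, 1)
    have hb4 := hb (1, -1)
    simp only at hb1 hb2 hb3 hb4
    field_simp at hb1 hb2 hb3 hb4
    -- directional derivatives of g vanish
    have hMu : Mu * L = M * Pp ^ 2 * Lu := by
      refine mul_right_cancel₀ (b := 8 * L ^ 4) (by positivity) ?_
      linear_combination (4 * L ^ 4) * (hb3 + hb4 - 2 * hb1)
    have hMv : Mv * L = -(M * Lv) := by
      refine mul_right_cancel₀ (b := 2 * L) h2L ?_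
      linear_combination (2 * L) * hb2
    have hPu2 : Pu * (2 * L) = -(Pp * (1 + Pp ^ 2) * Lu) := by rw [hPu']; field_simp
    have hPv2 : Pv * (2 * Pp * L) = (1 + Pp ^ 2) * Lv := by rw [hPv']; field_simp
    -- g has derivative D, and D = 0
    have hgd : HasFDerivAt g
        (M • ((((2 : ℕ) : ℝ) * Pp ^ 1) • fderiv ℝ P x) + (1 + Pp ^ 2) • fderiv ℝ μ x) x :=
      hμx.hasFDerivAt.mul
        (((hasDerivAt_pow 2 (P x)).comp_hasFDerivAt x hPx.hasFDerivAt).const_add 1)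
    have hD0 : (M • ((((2 : ℕ) : ℝ) * Pp ^ 1) • fderiv ℝ P x)
        + (1 + Pp ^ 2) • fderiv ℝ μ x) = 0 := by
      have h10 : (M • ((((2 : ℕ) : ℝ) * Pp ^ 1) • fderiv ℝ P x)
          + (1 + Pp ^ 2) • fderiv ℝ μ x) (1, 0) = 0 := by
        simp only [ContinuousLinearMap.add_apply, ContinuousLinearMap.smul_apply, smul_eq_mul]
        have : M * (2 * Pp ^ 1 * Pu) + (1 + Pp ^ 2) * Mu = 0 := by
          refine mul_right_cancel₀ (b := 2 * L) h2L ?_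
          rw [zero_mul]
          linear_combination (2 * M * Pp) * hPu2 + (2 * (1 + Pp ^ 2)) * hMu
        simpa using this
      have h01 : (M • ((((2 : ℕ) : ℝ) * Pp ^ 1) • fderiv ℝ P x)
          + (1 + Pp ^ 2) • fderiv ℝ μ x) (0, 1) = 0 := by
        simp only [ContinuousLinearMap.add_apply, ContinuousLinearMap.smul_apply, smul_eq_mul]
        have : M * (2 * Pp ^ 1 * Pv) + (1 + Pp ^ 2) * Mv = 0 := by
          refine mul_right_cancel₀ (b := 2 * Pp * L) (mul_ne_zero (mul_ne_zero two_ne_zero hPp0) hL0) ?_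
          rw [zero_mul]
          linear_combination (2 * M * Pp) * hPv2 + (2 * Pp * (1 + Pp ^ 2)) * hMv
        simpa using this
      refine ContinuousLinearMap.ext fun v => ?_
      have hv : v = v.1 • ((1 : ℝ), (0 : ℝ)) + v.2 • ((0 : ℝ), (1 : ℝ)) := by
        ext <;> simp
      rw [hv]
      simp only [map_add, map_smul, h10, h01]
      simp
    rw [hD0] at hgd
    exact hgd
  -- local constancy on balls
  have hloc : ∀ x ∈ U, ∃ ε > 0, Metric.ball x ε ⊆ U ∧ ∀ y ∈ Metric.ball x ε, g y = g x := by
    intro x hx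
    obtain ⟨ε, hε, hball⟩ := Metric.isOpen_iff.1 hU x hx
    refine ⟨ε, hε, hball, fun y hy => ?_⟩
    exact (convex_ball x ε).is_const_of_fderivWithin_eq_zero
      (fun z hz => ((key z (hball hz)).differentiableAt).differentiableWithinAt)
      (fun z hz => by
        rw [fderivWithin_of_isOpen Metric.isOpen_ball hz]
        exact (key z (hball hz)).fderiv)
      hy (Metric.mem_ball_self hε)
  -- connectedness argument
  obtain ⟨x₀, hx₀⟩ := hUconn.nonempty
  refine ⟨g x₀, fun x hx => ?_⟩
  by_contra hne
  have hopen1 : IsOpen {y | y ∈ U ∧ g y = g x₀} := by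
    rw [Metric.isOpen_iff]
    rintro y ⟨hyU, hyc⟩
    obtain ⟨ε, hε, hball, hconst⟩ := hloc y hyU
    exact ⟨ε, hε, fun z hz => ⟨hball hz, (hconst z hz).trans hyc⟩⟩
  have hopen2 : IsOpen {y | y ∈ U ∧ g y ≠ g x₀} := by
    rw [Metric.isOpen_iff]
    rintro y ⟨hyU, hyc⟩
    obtain ⟨ε, hε, hball, hconst⟩ := hloc y hyU
    exact ⟨ε, hε, fun z hz => ⟨hball hz, by rw [hconst z hz]; exact hyc⟩⟩
  obtain ⟨z, -, ⟨-, hz1⟩, -, hz2⟩ := hUconn.isPreconnected _ _ hopen1 hopen2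
    (fun y hy => by by_cases h : g y = g x₀ <;> [exact Or.inl ⟨hy, h⟩; exact Or.inr ⟨hy, h⟩])
    ⟨x₀, hx₀, hx₀, rfl⟩ ⟨x, hx, hx, hne⟩
  exact hz2 hz1
end

section
/- Let a, b : ℝ → ℝ be continuously differentiable and let (u,v,p,q) : J → ℝ⁴ be a differentiable solution on an interval J of Hamilton's equations u' = ∂H/∂p, v' = ∂H/∂q, p' = −∂H/∂u, q' = −∂H/∂v for H(u,v,p,q) = (p² + q²)/(2(a(u)² + b(v)²)), with a(u(t))² + b(v(t))² ≠ 0 for all t ∈ J. Suppose t₀, t₁ ∈ J are times with q(t₀) = 0, q(t₁) = 0 and p(t₀) ≠ 0. Then b(v(t₀))² = b(v(t₁))². (At a point of tangency of the geodesic with a coordinate line v = const, the value b(v)² equals the conserved ratio −I₀/(2H); hence all coordinate lines v = const touched by a given geodesic carry the same caustic label.) -/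
/-- Directional derivative of a 2-variable function in the first coordinate,
computed via a one-variable derivative. -/
lemma fderiv_dir_fst (f : ℝ × ℝ → ℝ) (x y d : ℝ)
    (hf : DifferentiableAt ℝ f (x, y))
    (h : HasDerivAt (fun s : ℝ => f (s, y)) d x) :
    fderiv ℝ f (x, y) (1, 0) = d := by
  have hg : HasDerivAt (fun s : ℝ => ((s, y) : ℝ × ℝ)) ((1, 0) : ℝ × ℝ) x :=
    (hasDerivAt_id x).prodMk (hasDerivAt_const x y)
  exact (hf.hasFDerivAt.comp_hasDerivAt x hg).unique h

/-- Directional derivative of a 2-variable function in the second coordinate. -/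
lemma fderiv_dir_snd (f : ℝ × ℝ → ℝ) (x y d : ℝ)
    (hf : DifferentiableAt ℝ f (x, y))
    (h : HasDerivAt (fun s : ℝ => f (x, s)) d y) :
    fderiv ℝ f (x, y) (0, 1) = d := by
  have hg : HasDerivAt (fun s : ℝ => ((x, s) : ℝ × ℝ)) ((0, 1) : ℝ × ℝ) y :=
    (hasDerivAt_const y x).prodMk (hasDerivAt_id y)
  exact (hf.hasFDerivAt.comp_hasDerivAt y hg).unique h

/-- along a geodesic of the Liouville metric (a solution of
Hamilton's equations for `H = (p² + q²)/(2(a(u)² + b(v)²))`), all points of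
tangency with coordinate lines `v = const` (i.e. times with `q = 0`) carry the
same caustic label: `b(v(t₀))² = b(v(t₁))²`. -/
theorem caustic_label_constant
    (a b : ℝ → ℝ)
    (ha : ContDiff ℝ 1 a) (hb : ContDiff ℝ 1 b)
    (H : ℝ × ℝ → ℝ × ℝ → ℝ)
    (hH : ∀ x pq : ℝ × ℝ,
      H x pq = (pq.1 ^ 2 + pq.2 ^ 2) / (2 * ((a x.1) ^ 2 + (b x.2) ^ 2)))
    (J : Set ℝ) (hJ : Convex ℝ J)
    (u v p q : ℝ → ℝ)
    (hne : ∀ t ∈ J, (a (u t)) ^ 2 + (b (v t)) ^ 2 ≠ 0)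
    (hu : ∀ t ∈ J, HasDerivAt u (fderiv ℝ (H (u t, v t)) (p t, q t) (1, 0)) t)
    (hv : ∀ t ∈ J, HasDerivAt v (fderiv ℝ (H (u t, v t)) (p t, q t) (0, 1)) t)
    (hp : ∀ t ∈ J, HasDerivAt p
      (-(fderiv ℝ (fun x => H x (p t, q t)) (u t, v t) (1, 0))) t)
    (hq : ∀ t ∈ J, HasDerivAt q
      (-(fderiv ℝ (fun x => H x (p t, q t)) (u t, v t) (0, 1))) t)
    (t₀ t₁ : ℝ) (ht₀ : t₀ ∈ J) (ht₁ : t₁ ∈ J)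
    (hq0 : q t₀ = 0) (hq1 : q t₁ = 0) (hp0 : p t₀ ≠ 0) :
    (b (v t₀)) ^ 2 = (b (v t₁)) ^ 2 := by
  have da : Differentiable ℝ a := ha.differentiable one_ne_zero
  have db : Differentiable ℝ b := hb.differentiable one_ne_zero
  -- the two conserved quantities have zero derivative along J
  have key : ∀ t ∈ J,
      HasDerivAt (fun s => (p s ^ 2 + q s ^ 2) / (a (u s) ^ 2 + b (v s) ^ 2)) 0 t ∧
      HasDerivAt (fun s =>
        (b (v s) ^ 2 * p s ^ 2 - a (u s) ^ 2 * q s ^ 2) /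
          (a (u s) ^ 2 + b (v s) ^ 2)) 0 t := by
    intro t ht
    have hC : a (u t) ^ 2 + b (v t) ^ 2 ≠ 0 := hne t ht
    have hC2 : (2 : ℝ) * (a (u t) ^ 2 + b (v t) ^ 2) ≠ 0 := mul_ne_zero two_ne_zero hC
    -- derivatives of u and v
    have hHfun : H (u t, v t) =
        fun pq : ℝ × ℝ => (pq.1 ^ 2 + pq.2 ^ 2) / (2 * (a (u t) ^ 2 + b (v t) ^ 2)) :=
      funext fun pq => hH _ pq
    have hfd : DifferentiableAt ℝ
        (fun pq : ℝ × ℝ => (pq.1 ^ 2 + pq.2 ^ 2) / (2 * (a (u t) ^ 2 + b (v t) ^ 2)))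
        (p t, q t) := by
      have hnum2 : DifferentiableAt ℝ (fun pq : ℝ × ℝ => pq.1 ^ 2 + pq.2 ^ 2) (p t, q t) := by
        fun_prop
      simp only [div_eq_mul_inv]
      exact hnum2.mul (differentiableAt_const _)
    have hval1 : fderiv ℝ
        (fun pq : ℝ × ℝ => (pq.1 ^ 2 + pq.2 ^ 2) / (2 * (a (u t) ^ 2 + b (v t) ^ 2)))
        (p t, q t) (1, 0) = ((2 : ℕ) : ℝ) * p t ^ 1 / (2 * (a (u t) ^ 2 + b (v t) ^ 2)) :=
      fderiv_dir_fst _ _ _ _ hfd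
        (((hasDerivAt_pow 2 (p t)).add_const ((q t) ^ 2)).div_const _)
    have hval2 : fderiv ℝ
        (fun pq : ℝ × ℝ => (pq.1 ^ 2 + pq.2 ^ 2) / (2 * (a (u t) ^ 2 + b (v t) ^ 2)))
        (p t, q t) (0, 1) = ((2 : ℕ) : ℝ) * q t ^ 1 / (2 * (a (u t) ^ 2 + b (v t) ^ 2)) :=
      fderiv_dir_snd _ _ _ _ hfd
        (((hasDerivAt_pow 2 (q t)).const_add ((p t) ^ 2)).div_const _)
    have hu' : HasDerivAt u (p t / (a (u t) ^ 2 + b (v t) ^ 2)) t := by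
      have h := hu t ht
      rw [hHfun, hval1] at h
      convert h using 1
      push_cast
      field_simp
    have hv' : HasDerivAt v (q t / (a (u t) ^ 2 + b (v t) ^ 2)) t := by
      have h := hv t ht
      rw [hHfun, hval2] at h
      convert h using 1
      push_cast
      field_simp
    -- derivatives of p and q
    have hHfun2 : (fun x => H x (p t, q t)) =
        fun x : ℝ × ℝ => (p t ^ 2 + q t ^ 2) / (2 * (a x.1 ^ 2 + b x.2 ^ 2)) :=
      funext fun x => hH x _
    have haD : HasDerivAt a (deriv a (u t)) (u t) := (da (u t)).hasDerivAt
    have hbD : HasDerivAt b (deriv b (v t)) (v t) := (db (v t)).hasDerivAt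
    have ha1 : DifferentiableAt ℝ (fun x : ℝ × ℝ => a x.1) ((u t, v t) : ℝ × ℝ) :=
      DifferentiableAt.comp ((u t, v t) : ℝ × ℝ) (da (u t)) differentiableAt_fst
    have hb1 : DifferentiableAt ℝ (fun x : ℝ × ℝ => b x.2) ((u t, v t) : ℝ × ℝ) :=
      DifferentiableAt.comp ((u t, v t) : ℝ × ℝ) (db (v t)) differentiableAt_snd
    have hfd2 : DifferentiableAt ℝ
        (fun x : ℝ × ℝ => (p t ^ 2 + q t ^ 2) / (2 * (a x.1 ^ 2 + b x.2 ^ 2)))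
        (u t, v t) := by
      have hden2 : DifferentiableAt ℝ (fun x : ℝ × ℝ => 2 * (a x.1 ^ 2 + b x.2 ^ 2))
          ((u t, v t) : ℝ × ℝ) := ((ha1.pow 2).add (hb1.pow 2)).const_mul 2
      simp only [div_eq_mul_inv]
      exact (differentiableAt_const _).mul (hden2.inv (by simpa using hC2))
    have hval3 : fderiv ℝ
        (fun x : ℝ × ℝ => (p t ^ 2 + q t ^ 2) / (2 * (a x.1 ^ 2 + b x.2 ^ 2)))
        (u t, v t) (1, 0) =
        (0 * (2 * (a (u t) ^ 2 + b (v t) ^ 2)) -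
            (p t ^ 2 + q t ^ 2) * (2 * (((2 : ℕ) : ℝ) * a (u t) ^ 1 * deriv a (u t)))) /
          (2 * (a (u t) ^ 2 + b (v t) ^ 2)) ^ 2 :=
      fderiv_dir_fst _ _ _ _ hfd2
        ((hasDerivAt_const (u t) (p t ^ 2 + q t ^ 2)).div
          (((haD.pow 2).add_const (b (v t) ^ 2)).const_mul 2) hC2)
    have hval4 : fderiv ℝ
        (fun x : ℝ × ℝ => (p t ^ 2 + q t ^ 2) / (2 * (a x.1 ^ 2 + b x.2 ^ 2)))
        (u t, v t) (0, 1) =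
        (0 * (2 * (a (u t) ^ 2 + b (v t) ^ 2)) -
            (p t ^ 2 + q t ^ 2) * (2 * (((2 : ℕ) : ℝ) * b (v t) ^ 1 * deriv b (v t)))) /
          (2 * (a (u t) ^ 2 + b (v t) ^ 2)) ^ 2 :=
      fderiv_dir_snd _ _ _ _ hfd2
        ((hasDerivAt_const (v t) (p t ^ 2 + q t ^ 2)).div
          (((hbD.pow 2).const_add (a (u t) ^ 2)).const_mul 2) hC2)
    have hp' : HasDerivAt p
        ((p t ^ 2 + q t ^ 2) * a (u t) * deriv a (u t) /
          (a (u t) ^ 2 + b (v t) ^ 2) ^ 2) t := by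
      have h := hp t ht
      rw [hHfun2, hval3] at h
      convert h using 1
      push_cast
      field_simp
      ring
    have hq' : HasDerivAt q
        ((p t ^ 2 + q t ^ 2) * b (v t) * deriv b (v t) /
          (a (u t) ^ 2 + b (v t) ^ 2) ^ 2) t := by
      have h := hq t ht
      rw [hHfun2, hval4] at h
      convert h using 1
      push_cast
      field_simp
      ring
    -- chain-rule derivatives of a ∘ u, b ∘ v
    have hau : HasDerivAt (fun s => a (u s))
        (deriv a (u t) * (p t / (a (u t) ^ 2 + b (v t) ^ 2))) t := haD.comp t hu'
    have hbv : HasDerivAt (fun s => b (v s))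
        (deriv b (v t) * (q t / (a (u t) ^ 2 + b (v t) ^ 2))) t := hbD.comp t hv'
    have hden : HasDerivAt (fun s => a (u s) ^ 2 + b (v s) ^ 2)
        (((2 : ℕ) : ℝ) * a (u t) ^ 1 *
            (deriv a (u t) * (p t / (a (u t) ^ 2 + b (v t) ^ 2))) +
          ((2 : ℕ) : ℝ) * b (v t) ^ 1 *
            (deriv b (v t) * (q t / (a (u t) ^ 2 + b (v t) ^ 2)))) t :=
      (hau.pow 2).add (hbv.pow 2)
    constructor
    · have hnum : HasDerivAt (fun s => p s ^ 2 + q s ^ 2)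
          (((2 : ℕ) : ℝ) * p t ^ 1 *
              ((p t ^ 2 + q t ^ 2) * a (u t) * deriv a (u t) /
                (a (u t) ^ 2 + b (v t) ^ 2) ^ 2) +
            ((2 : ℕ) : ℝ) * q t ^ 1 *
              ((p t ^ 2 + q t ^ 2) * b (v t) * deriv b (v t) /
                (a (u t) ^ 2 + b (v t) ^ 2) ^ 2)) t :=
        (hp'.pow 2).add (hq'.pow 2)
      have h := hnum.div hden hC
      refine h.congr_deriv ?_
      push_cast
      field_simp
      ring
    · have hnum : HasDerivAt (fun s => b (v s) ^ 2 * p s ^ 2 - a (u s) ^ 2 * q s ^ 2)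
          ((((2 : ℕ) : ℝ) * b (v t) ^ 1 *
                (deriv b (v t) * (q t / (a (u t) ^ 2 + b (v t) ^ 2))) * p t ^ 2 +
              b (v t) ^ 2 *
                (((2 : ℕ) : ℝ) * p t ^ 1 *
                  ((p t ^ 2 + q t ^ 2) * a (u t) * deriv a (u t) /
                    (a (u t) ^ 2 + b (v t) ^ 2) ^ 2))) -
            (((2 : ℕ) : ℝ) * a (u t) ^ 1 *
                (deriv a (u t) * (p t / (a (u t) ^ 2 + b (v t) ^ 2))) * q t ^ 2 +
              a (u t) ^ 2 *
                (((2 : ℕ) : ℝ) * q t ^ 1 *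
                  ((p t ^ 2 + q t ^ 2) * b (v t) * deriv b (v t) /
                    (a (u t) ^ 2 + b (v t) ^ 2) ^ 2)))) t :=
        ((hbv.pow 2).mul (hp'.pow 2)).sub ((hau.pow 2).mul (hq'.pow 2))
      have h := hnum.div hden hC
      refine h.congr_deriv ?_
      push_cast
      field_simp
      ring
  -- conserved quantities are constant on J
  have hEconst : (p t₁ ^ 2 + q t₁ ^ 2) / (a (u t₁) ^ 2 + b (v t₁) ^ 2) =
      (p t₀ ^ 2 + q t₀ ^ 2) / (a (u t₀) ^ 2 + b (v t₀) ^ 2) := by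
    have h := hJ.norm_image_sub_le_of_norm_hasDerivWithin_le
      (C := 0) (f' := fun _ => (0 : ℝ))
      (fun x hx => ((key x hx).1).hasDerivWithinAt)
      (fun x _ => by simp) ht₀ ht₁
    rw [zero_mul] at h
    exact sub_eq_zero.mp (norm_le_zero_iff.mp h)
  have hGconst : (b (v t₁) ^ 2 * p t₁ ^ 2 - a (u t₁) ^ 2 * q t₁ ^ 2) /
        (a (u t₁) ^ 2 + b (v t₁) ^ 2) =
      (b (v t₀) ^ 2 * p t₀ ^ 2 - a (u t₀) ^ 2 * q t₀ ^ 2) /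
        (a (u t₀) ^ 2 + b (v t₀) ^ 2) := by
    have h := hJ.norm_image_sub_le_of_norm_hasDerivWithin_le
      (C := 0) (f' := fun _ => (0 : ℝ))
      (fun x hx => ((key x hx).2).hasDerivWithinAt)
      (fun x _ => by simp) ht₀ ht₁
    rw [zero_mul] at h
    exact sub_eq_zero.mp (norm_le_zero_iff.mp h)
  -- final algebra
  have hE01 : p t₁ ^ 2 / (a (u t₁) ^ 2 + b (v t₁) ^ 2) =
      p t₀ ^ 2 / (a (u t₀) ^ 2 + b (v t₀) ^ 2) := by
    simpa [hq0, hq1] using hEconst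
  have hG01 : b (v t₁) ^ 2 * (p t₁ ^ 2 / (a (u t₁) ^ 2 + b (v t₁) ^ 2)) =
      b (v t₀) ^ 2 * (p t₀ ^ 2 / (a (u t₀) ^ 2 + b (v t₀) ^ 2)) := by
    simpa [hq0, hq1, mul_div_assoc] using hGconst
  rw [hE01] at hG01
  have hne0 : p t₀ ^ 2 / (a (u t₀) ^ 2 + b (v t₀) ^ 2) ≠ 0 :=
    div_ne_zero (pow_ne_zero 2 hp0) (hne t₀ ht₀)
  exact (mul_right_cancel₀ hne0 hG01).symm
end

section
/- Let ε ∈ {1, −1}, let k ∈ ℝ with k ≠ 0, let l ∈ ℝ, let I ⊆ (0, ∞) be an open interval, and let y : I → ℝ be twice differentiable with y(z) ≠ l and k²(y(z) − l)² − k z² = ε for all z ∈ I. Then y solves the geodesic equation z³ y''(z) = ε (y'(z))³ for all z ∈ I. -/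
/-- every branch of the conic `k²(y − l)² − k z² = ε` (with `k ≠ 0`)
solves the geodesic equation `z³ y'' = ε (y')³` on an open interval `I ⊆ (0, ∞)`. -/
theorem conics_solve_geodesic_equation
    (ε : ℝ) (hε : ε = 1 ∨ ε = -1)
    (k : ℝ) (hk : k ≠ 0) (l : ℝ)
    (I : Set ℝ) (hIopen : IsOpen I) (hIconv : Convex ℝ I) (hIsub : I ⊆ Set.Ioi 0)
    (y y' y'' : ℝ → ℝ)
    (hy' : ∀ z ∈ I, HasDerivAt y (y' z) z)
    (hy'' : ∀ z ∈ I, HasDerivAt y' (y'' z) z)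
    (hyl : ∀ z ∈ I, y z ≠ l)
    (hconic : ∀ z ∈ I, k ^ 2 * (y z - l) ^ 2 - k * z ^ 2 = ε) :
    ∀ z ∈ I, z ^ 3 * y'' z = ε * (y' z) ^ 3 := by
  -- First derivative of the conic relation: k² (y−l) y' = k z on I.
  have eq1 : ∀ z ∈ I, k ^ 2 * ((y z - l) * y' z) = k * z := by
    intro z hz
    have hF : HasDerivAt (fun t => k ^ 2 * (y t - l) ^ 2 - k * t ^ 2)
        (k ^ 2 * (2 * (y z - l) * y' z) - k * (2 * z)) z := by
      have h1 : HasDerivAt (fun t => (y t - l) ^ 2) (2 * (y z - l) * y' z) z := by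
        have := ((hy' z hz).sub_const l).fun_pow 2
        simpa [mul_comm, mul_assoc, mul_left_comm] using this
      have h2 : HasDerivAt (fun t : ℝ => t ^ 2) (2 * z) z := by
        simpa using hasDerivAt_pow 2 z
      exact (h1.const_mul (k ^ 2)).sub (h2.const_mul k)
    have heq : (fun t => k ^ 2 * (y t - l) ^ 2 - k * t ^ 2) =ᶠ[nhds z] fun _ => ε := by
      filter_upwards [hIopen.mem_nhds hz] with t ht using hconic t ht
    have h0 : HasDerivAt (fun _ : ℝ => ε)
        (k ^ 2 * (2 * (y z - l) * y' z) - k * (2 * z)) z :=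
      hF.congr_of_eventuallyEq heq.symm
    have := (hasDerivAt_const z ε).unique h0
    nlinarith [this]
  intro z hz
  have hz0 : (0 : ℝ) < z := hIsub hz
  have hune : y z - l ≠ 0 := sub_ne_zero.mpr (hyl z hz)
  -- Second derivative: k²(y'² + (y−l) y'') = k.
  have eq2 : k ^ 2 * (y' z * y' z + (y z - l) * y'' z) = k := by
    have hG : HasDerivAt (fun t => k ^ 2 * ((y t - l) * y' t) - k * t)
        (k ^ 2 * (y' z * y' z + (y z - l) * y'' z) - k * 1) z := by
      have h1 : HasDerivAt (fun t => (y t - l) * y' t)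
          (y' z * y' z + (y z - l) * y'' z) z :=
        ((hy' z hz).sub_const l).mul (hy'' z hz)
      exact (h1.const_mul (k ^ 2)).sub ((hasDerivAt_id z).const_mul k)
    have heq : (fun t => k ^ 2 * ((y t - l) * y' t) - k * t) =ᶠ[nhds z] fun _ => 0 := by
      filter_upwards [hIopen.mem_nhds hz] with t ht
      have := eq1 t ht
      linarith
    have h0 : HasDerivAt (fun _ : ℝ => (0 : ℝ))
        (k ^ 2 * (y' z * y' z + (y z - l) * y'' z) - k * 1) z :=
      hG.congr_of_eventuallyEq heq.symm
    have := (hasDerivAt_const z (0 : ℝ)).unique h0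
    linarith
  set u := y z - l with hu
  set p := y' z with hp
  set q := y'' z with hq
  have hz2 : z = k * u * p := by
    have h := eq1 z hz
    have : k * (k * u * p) = k * z := by ring_nf; ring_nf at h; linarith
    have := mul_left_cancel₀ hk this
    linarith
  have e2' : k * (p * p + u * q) = 1 := by
    have : k * (k * (p * p + u * q)) = k * 1 := by ring_nf; ring_nf at eq2; linarith
    exact mul_left_cancel₀ hk this
  have hc := hconic z hz
  rw [← hu] at hc
  linear_combination p ^ 3 * hc +
    (q * (z ^ 2 + z * (k * u * p) + (k * u * p) ^ 2) + k * p ^ 3 * (z + k * u * p)) * hz2 +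
    k ^ 2 * u ^ 2 * p ^ 3 * e2'
end

section
/- Let ε ∈ {1, −1}, let I ⊆ (0, ∞) be an open interval, and let y : I → ℝ be twice differentiable with z³ y''(z) = ε (y'(z))³ and y'(z) ≠ 0 for all z ∈ I. Then either there exist k ≠ 0 and l ∈ ℝ such that k²(y(z) − l)² − k z² = ε for all z ∈ I, or ε = 1 and there exist l ∈ ℝ and σ ∈ {1, −1} such that y(z) = σ z²/2 + l for all z ∈ I. -/
/-- A function whose derivative vanishes on a convex set is constant there. -/
lemma aux_const_of_deriv_zero {I : Set ℝ} (hc : Convex ℝ I) {f : ℝ → ℝ}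
    (hf : ∀ z ∈ I, HasDerivAt f 0 z) : ∀ a ∈ I, ∀ b ∈ I, f a = f b := by
  intro a ha b hb
  have h := Convex.norm_image_sub_le_of_norm_hasDerivWithin_le
    (f := f) (f' := fun _ => (0:ℝ)) (C := 0)
    (fun z hz => (hf z hz).hasDerivWithinAt) (fun z hz => by simp) hc hb ha
  have : ‖f a - f b‖ ≤ 0 := by simpa using h
  have := norm_nonneg (f a - f b)
  have : f a - f b = 0 := by
    have := norm_eq_zero.mp (le_antisymm ‹‖f a - f b‖ ≤ 0› (norm_nonneg _))
    exact this
  linarith [this]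

/-- any solution of the geodesic equation `z³ y'' = ε (y')³` with
nowhere vanishing `y'` on an open interval `I ⊆ (0, ∞)` either lies on a conic
`k²(y − l)² − k z² = ε` with `k ≠ 0`, or `ε = 1` and `y = ±z²/2 + l`. -/
theorem geodesic_equation_solutions_are_conics
    (ε : ℝ) (hε : ε = 1 ∨ ε = -1)
    (I : Set ℝ) (hIopen : IsOpen I) (hIconv : Convex ℝ I) (hIsub : I ⊆ Set.Ioi 0)
    (y y' y'' : ℝ → ℝ)
    (hy' : ∀ z ∈ I, HasDerivAt y (y' z) z)
    (hy'' : ∀ z ∈ I, HasDerivAt y' (y'' z) z)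
    (hgeo : ∀ z ∈ I, z ^ 3 * y'' z = ε * (y' z) ^ 3)
    (hy'0 : ∀ z ∈ I, y' z ≠ 0) :
    (∃ k : ℝ, k ≠ 0 ∧ ∃ l : ℝ, ∀ z ∈ I, k ^ 2 * (y z - l) ^ 2 - k * z ^ 2 = ε)
    ∨ (ε = 1 ∧ ∃ l σ : ℝ, (σ = 1 ∨ σ = -1) ∧ ∀ z ∈ I, y z = σ * z ^ 2 / 2 + l) := by
  rcases Set.eq_empty_or_nonempty I with hI | ⟨z₀, hz₀⟩
  · left; exact ⟨1, one_ne_zero, 0, by simp [hI]⟩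
  have hzpos : ∀ z ∈ I, (0:ℝ) < z := fun z hz => hIsub hz
  -- the first integral g = 1/y'^2 - ε/z^2 is constant
  set g : ℝ → ℝ := fun z => ((y' z) ^ 2)⁻¹ - ε * (z ^ 2)⁻¹ with hgdef
  have hg : ∀ z ∈ I, HasDerivAt g 0 z := by
    intro z hz
    have hzne : z ≠ 0 := (hzpos z hz).ne'
    have hy'ne := hy'0 z hz
    have h1 : HasDerivAt (fun z => ((y' z) ^ 2)⁻¹)
        (-(2 * y' z ^ 1 * y'' z) / ((y' z) ^ 2) ^ 2) z :=
      ((hy'' z hz).pow 2).inv (pow_ne_zero 2 hy'ne)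
    have h2 : HasDerivAt (fun z : ℝ => ε * (z ^ 2)⁻¹)
        (ε * (-(2 * z ^ 1 * 1) / (z ^ 2) ^ 2)) z :=
      (((hasDerivAt_id z).pow 2).inv (pow_ne_zero 2 hzne)).const_mul ε
    have h := h1.sub h2
    refine HasDerivAt.congr_deriv h ?_; symm
    have hg' := hgeo z hz
    field_simp
    linear_combination 2 * hg'
  obtain ⟨A, hA⟩ : ∃ A : ℝ, ∀ z ∈ I, g z = A :=
    ⟨g z₀, fun z hz => aux_const_of_deriv_zero hIconv hg z hz z₀ hz₀⟩
  -- polynomial form of the first integral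
  have hpoly : ∀ z ∈ I, z ^ 2 = (y' z) ^ 2 * (ε + A * z ^ 2) := by
    intro z hz
    have h := hA z hz
    have hzne : z ≠ 0 := (hzpos z hz).ne'
    have hy'ne := hy'0 z hz
    simp only [hgdef] at h
    field_simp at h
    linarith [h]
  by_cases hA0 : A = 0
  · -- parabolic case
    right
    subst hA0
    have hsq : ∀ z ∈ I, z ^ 2 = (y' z) ^ 2 * ε := by
      intro z hz; simpa using hpoly z hz
    have hε1 : ε = 1 := by
      rcases hε with h | h
      · exact h
      · exfalso
        have h0 := hsq z₀ hz₀
        have := hzpos z₀ hz₀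
        nlinarith [sq_nonneg (y' z₀)]
    subst hε1
    refine ⟨rfl, ?_⟩
    -- s = y'/z is constant
    set s : ℝ → ℝ := fun z => y' z * z⁻¹ with hsdef
    have hs : ∀ z ∈ I, HasDerivAt s 0 z := by
      intro z hz
      have hzne : z ≠ 0 := (hzpos z hz).ne'
      have h := (hy'' z hz).mul (hasDerivAt_inv hzne)
      refine HasDerivAt.congr_deriv h ?_; symm
      have hg' := hgeo z hz
      have hq := hsq z hz
      have hyz : y'' z * z ^ 2 = y' z * z := by
        apply mul_right_cancel₀ hzne
        linear_combination hg' - y' z * hq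
      field_simp
      linear_combination -(mul_right_cancel₀ hzne (by linear_combination hyz : y'' z * z * z = y' z * z))
    obtain ⟨σ, hσdef⟩ : ∃ σ : ℝ, σ = s z₀ := ⟨_, rfl⟩
    have hsconst : ∀ z ∈ I, y' z = σ * z := by
      intro z hz
      have hc := aux_const_of_deriv_zero hIconv hs z hz z₀ hz₀
      have hzne : z ≠ 0 := (hzpos z hz).ne'
      have hz₀ne : z₀ ≠ 0 := (hzpos z₀ hz₀).ne'
      rw [hσdef]
      simp only [hsdef] at hc ⊢
      rw [← hc]
      field_simp
    have hσsq : σ ^ 2 = 1 := by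
      have h1 := hsconst z₀ hz₀
      have h2 := hsq z₀ hz₀
      have hz₀ne : z₀ ≠ 0 := (hzpos z₀ hz₀).ne'
      have : σ ^ 2 * z₀ ^ 2 = 1 * z₀ ^ 2 := by
        linear_combination -(y' z₀ + σ * z₀) * h1 - h2
      exact mul_right_cancel₀ (pow_ne_zero 2 hz₀ne) this
    have hσor : σ = 1 ∨ σ = -1 := by
      have : (σ - 1) * (σ + 1) = 0 := by nlinarith
      rcases mul_eq_zero.mp this with h | h
      · left; linarith
      · right; linarith
    -- y - σ z²/2 is constant
    set h : ℝ → ℝ := fun z => y z - σ * z ^ 2 / 2 with hhdef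
    have hh : ∀ z ∈ I, HasDerivAt h 0 z := by
      intro z hz
      have hd : HasDerivAt (fun z : ℝ => σ * z ^ 2 / 2) (σ * (2 * z ^ 1 * 1) / 2) z :=
        (((hasDerivAt_id z).pow 2).const_mul σ).div_const 2
      have := (hy' z hz).sub hd
      refine HasDerivAt.congr_deriv this ?_; symm
      have := hsconst z hz
      simp; linarith [this]
    refine ⟨h z₀, σ, hσor, fun z hz => ?_⟩
    have := aux_const_of_deriv_zero hIconv hh z hz z₀ hz₀
    simp only [hhdef] at this ⊢
    linarith [this]
  · -- conic case
    left
    refine ⟨A, hA0, ?_⟩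
    set w : ℝ → ℝ := fun z => y z - z * (A * y' z)⁻¹ with hwdef
    have hw : ∀ z ∈ I, HasDerivAt w 0 z := by
      intro z hz
      have hzne : z ≠ 0 := (hzpos z hz).ne'
      have hy'ne := hy'0 z hz
      have hAy' : A * y' z ≠ 0 := mul_ne_zero hA0 hy'ne
      have hd : HasDerivAt (fun z => z * (A * y' z)⁻¹)
          (1 * (A * y' z)⁻¹ + z * (-(A * y'' z) / (A * y' z) ^ 2)) z :=
        (hasDerivAt_id z).mul (((hy'' z hz).const_mul A).inv hAy')
      have := (hy' z hz).sub hd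
      refine HasDerivAt.congr_deriv this ?_; symm
      have hg' := hgeo z hz
      have hp := hpoly z hz
      have hkey2 : A * y' z ^ 3 = y' z - z * y'' z := by
        apply mul_right_cancel₀ (pow_ne_zero 2 hzne)
        linear_combination hg' - y' z * hp
      field_simp
      linear_combination -hkey2
    refine ⟨w z₀, fun z hz => ?_⟩
    have hc : y z - w z₀ = z * (A * y' z)⁻¹ := by
      have := aux_const_of_deriv_zero hIconv hw z hz z₀ hz₀
      simp only [hwdef] at this
      linarith [this]
    have hzne : z ≠ 0 := (hzpos z hz).ne'
    have hy'ne := hy'0 z hz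
    have hp := hpoly z hz
    rw [hc]
    field_simp
    linear_combination hp
end

section
/- Let E, F, G : ℝ → ℝ be continuously differentiable functions of one variable with E(v) > 0 and E(v)G(v) − F(v)² > 0 for all v ∈ ℝ. Then for every v₀ ∈ ℝ there exist δ > 0 and continuously differentiable functions ψ, φ : (−δ, δ) → ℝ with ψ(0) = v₀ and ψ' > 0, such that for all t ∈ (−δ, δ): E(ψ(t))·φ'(t) + F(ψ(t))·ψ'(t) = 0 and E(ψ(t))·φ'(t)² + 2F(ψ(t))·φ'(t)·ψ'(t) + G(ψ(t))·ψ'(t)² = 1. -/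
open Set

/-- rectification of a metric `g = E(v)du² + 2F(v)du dv + G(v)dv²`
with coefficients independent of `u`: near any `v₀` there is a local substitution
`u ↦ u + φ(v)`, `v ↦ ψ(v)` (with `ψ(0) = v₀`, `ψ' > 0`) killing the cross term and
normalizing the coefficient of `dv²` to `1`, i.e. bringing `g` to `E(v)du² + dv²`. -/
theorem killing_normal_form_coordinates
    (E F G : ℝ → ℝ)
    (hE : ContDiff ℝ 1 E) (hF : ContDiff ℝ 1 F) (hG : ContDiff ℝ 1 G)
    (hEpos : ∀ v : ℝ, 0 < E v)
    (hdet : ∀ v : ℝ, 0 < E v * G v - (F v) ^ 2) :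
    ∀ v₀ : ℝ, ∃ δ > 0, ∃ ψ φ : ℝ → ℝ,
      ContDiffOn ℝ 1 ψ (Set.Ioo (-δ) δ) ∧
      ContDiffOn ℝ 1 φ (Set.Ioo (-δ) δ) ∧
      ψ 0 = v₀ ∧
      (∀ t ∈ Set.Ioo (-δ) δ, 0 < deriv ψ t) ∧
      (∀ t ∈ Set.Ioo (-δ) δ,
        E (ψ t) * deriv φ t + F (ψ t) * deriv ψ t = 0) ∧
      (∀ t ∈ Set.Ioo (-δ) δ,
        E (ψ t) * (deriv φ t) ^ 2 + 2 * F (ψ t) * deriv φ t * deriv ψ t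
          + G (ψ t) * (deriv ψ t) ^ 2 = 1) := by
  intro v₀
  set r : ℝ → ℝ := fun v => Real.sqrt (E v / (E v * G v - F v ^ 2)) with hr
  have hargpos : ∀ v, 0 < E v / (E v * G v - F v ^ 2) := fun v =>
    div_pos (hEpos v) (hdet v)
  have hrpos : ∀ v, 0 < r v := fun v => Real.sqrt_pos.mpr (hargpos v)
  have hrC : ContDiff ℝ 1 r := by
    rw [contDiff_iff_contDiffAt]
    intro v
    exact (Real.contDiffAt_sqrt (ne_of_gt (hargpos v))).comp v
      (hE.contDiffAt.div ((hE.contDiffAt.mul hG.contDiffAt).sub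
        (hF.contDiffAt.pow 2)) (ne_of_gt (hdet v)))
  obtain ⟨f, hf0, ε, hε, hf⟩ :=
    (hrC.contDiffAt (x := v₀)).exists_forall_mem_closedBall_exists_eq_forall_mem_Ioo_hasDerivAt₀ (0 : ℝ)
  have hf' : ∀ t ∈ Ioo (-ε) ε, HasDerivAt f (r (f t)) t := by
    intro t ht; exact hf t (by simpa using ht)
  have hψc : ContinuousOn f (Ioo (-ε) ε) := fun t ht =>
    (hf' t ht).continuousAt.continuousWithinAt
  set q : ℝ → ℝ := fun s => -(F (f s) / E (f s)) * r (f s) with hq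
  have hqc : ContinuousOn q (Ioo (-ε) ε) := by
    apply ContinuousOn.mul
    · exact ((hF.continuous.comp_continuousOn hψc).div
        (hE.continuous.comp_continuousOn hψc)
        (fun t _ => ne_of_gt (hEpos (f t)))).neg
    · exact hrC.continuous.comp_continuousOn hψc
  set φ : ℝ → ℝ := fun t => ∫ s in (0:ℝ)..t, q s with hφdef
  have h0mem : (0:ℝ) ∈ Ioo (-ε) ε := ⟨by linarith, hε⟩
  have hφ : ∀ t ∈ Ioo (-ε) ε, HasDerivAt φ (q t) t := by
    intro t ht
    apply intervalIntegral.integral_hasDerivAt_right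
    · exact (hqc.mono (ordConnected_Ioo.uIcc_subset h0mem ht)).intervalIntegrable
    · exact hqc.stronglyMeasurableAtFilter isOpen_Ioo t ht
    · exact hqc.continuousAt (isOpen_Ioo.mem_nhds ht)
  have hφc : ContinuousOn φ (Ioo (-ε) ε) := fun t ht =>
    (hφ t ht).continuousAt.continuousWithinAt
  have hdψ : ∀ t ∈ Ioo (-ε) ε, deriv f t = r (f t) := fun t ht => (hf' t ht).deriv
  have hdφ : ∀ t ∈ Ioo (-ε) ε, deriv φ t = q t := fun t ht => (hφ t ht).deriv
  refine ⟨ε, hε, f, φ, ?_, ?_, hf0, ?_, ?_, ?_⟩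
  · have : ContDiffOn ℝ (0+1) f (Ioo (-ε) ε) := by
      rw [contDiffOn_succ_iff_deriv_of_isOpen isOpen_Ioo]
      refine ⟨fun t ht => (hf' t ht).differentiableAt.differentiableWithinAt, by simp, ?_⟩
      rw [contDiffOn_zero]
      exact (hrC.continuous.comp_continuousOn hψc).congr hdψ
    simpa using this
  · have : ContDiffOn ℝ (0+1) φ (Ioo (-ε) ε) := by
      rw [contDiffOn_succ_iff_deriv_of_isOpen isOpen_Ioo]
      refine ⟨fun t ht => (hφ t ht).differentiableAt.differentiableWithinAt, by simp, ?_⟩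
      rw [contDiffOn_zero]
      exact hqc.congr hdφ
    simpa using this
  · intro t ht
    rw [hdψ t ht]
    exact hrpos (f t)
  · intro t ht
    rw [hdψ t ht, hdφ t ht]
    have hEne : E (f t) ≠ 0 := ne_of_gt (hEpos (f t))
    simp only [hq]
    field_simp
    ring
  · intro t ht
    rw [hdψ t ht, hdφ t ht]
    simp only [hq]
    generalize f t = p
    have hEne : E p ≠ 0 := ne_of_gt (hEpos p)
    have hDne : E p * G p - F p ^ 2 ≠ 0 := ne_of_gt (hdet p)
    have hr2' : r p ^ 2 * (E p * G p - F p ^ 2) = E p := by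
      rw [show r p ^ 2 = E p / (E p * G p - F p ^ 2) from
        Real.sq_sqrt (le_of_lt (hargpos p))]
      field_simp
    field_simp
    linear_combination hr2'
end
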